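/- arXiv:2005.11538 — 3 statements merged into one kernel-verified Lean document; each statement's English description precedes it below -/
import Mathlib

section
/- Let B be a standard Brownian motion, μ, σ > 0, λ = 2μ/σ², and let f(t) := E[exp(λ sup_{0≤s≤t}(−μs + σB_s))]. Then for every t > 0, f'(t) ≤ 2μ²/σ² + 3μ/(σ√t). -/
open MeasureTheory Filter Topology

open Real Filter Asymptotics Topology in
private lemma aux_l0 {b : ℝ} (hb : 0 < b) :
    Tendsto (fun y : ℝ => Real.exp (-(b * y ^ 2))) atTop (𝓝 0) := by
  have h : Tendsto (fun y : ℝ => b * y ^ 2) atTop atTop :=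
    Tendsto.const_mul_atTop hb (tendsto_pow_atTop two_ne_zero)
  exact Real.tendsto_exp_atBot.comp (tendsto_neg_atTop_atBot.comp h)

open Real Filter Asymptotics Topology in
private lemma aux_l1 {b : ℝ} (hb : 0 < b) :
    Tendsto (fun y : ℝ => y * Real.exp (-(b * y ^ 2))) atTop (𝓝 0) := by
  have hhalf : Tendsto (fun x : ℝ => Real.exp (-(1 / 2) * x)) atTop (𝓝 0) :=
    Real.tendsto_exp_atBot.comp (Tendsto.const_mul_atTop_of_neg (by norm_num) tendsto_id)
  have h := (rpow_mul_exp_neg_mul_sq_isLittleO_exp_neg hb 1).isBigO.trans_tendsto hhalf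
  simpa [Real.rpow_one, neg_mul] using h

open Real Filter Asymptotics Topology in
private lemma aux_int2 {b : ℝ} (hb : 0 < b) :
    Integrable (fun y : ℝ => y ^ 2 * Real.exp (-(b * y ^ 2))) := by
  have h := integrable_rpow_mul_exp_neg_mul_sq hb (s := 2) (by norm_num)
  have e : ∀ y : ℝ, y ^ (2 : ℝ) = y ^ 2 := fun y => Real.rpow_two y ▸ rfl
  simpa [neg_mul, e] using h

theorem stmt3 (μ σ lam : ℝ) (hμ : 0 < μ) (hσ : 0 < σ) (hlam : lam = 2 * μ / σ ^ 2)
    (f d : ℝ → ℝ)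
    (hderiv : ∀ t, 0 < t → HasDerivAt f (d t) t)
    (hrep : ∀ t, 0 < t → d t = (Real.sqrt (2 * Real.pi * σ ^ 2 * t ^ 3))⁻¹ *
      ∫ z in Set.Ioi (0 : ℝ),
        Real.exp (lam * z - (z + μ * t) ^ 2 / (2 * σ ^ 2 * t)) *
          ((z + μ * t) * z / (σ ^ 2 * t) - 1)) :
    ∀ t, 0 < t → d t ≤ 2 * μ ^ 2 / σ ^ 2 + 3 * μ / (σ * Real.sqrt t) := by
  intro t ht
  rw [hrep t ht]
  have hσ2 : (0:ℝ) < σ ^ 2 := by positivity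
  have hσ2t : (0:ℝ) < σ ^ 2 * t := by positivity
  have hb : (0:ℝ) < (2 * σ ^ 2 * t)⁻¹ := by positivity
  set b : ℝ := (2 * σ ^ 2 * t)⁻¹ with hb_def
  set c : ℝ := μ * t with hc_def
  have hc : 0 < c := by positivity
  set G : ℝ → ℝ := fun z => -((z + 2 * c) * Real.exp (-(b * (z - c) ^ 2))) with hG_def
  set G' : ℝ → ℝ := fun z =>
    Real.exp (-(b * (z - c) ^ 2)) * ((z - c) * (z + 2 * c) / (σ ^ 2 * t) - 1) with hG'_def
  set H : ℝ → ℝ := fun z =>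
    Real.exp (-(b * (z - c) ^ 2)) * (2 * μ ^ 2 * t / σ ^ 2) with hH_def
  -- pointwise decomposition of the integrand
  have key : ∀ z : ℝ,
      Real.exp (lam * z - (z + μ * t) ^ 2 / (2 * σ ^ 2 * t)) *
        ((z + μ * t) * z / (σ ^ 2 * t) - 1) = G' z + H z := by
    intro z
    have hexp : lam * z - (z + μ * t) ^ 2 / (2 * σ ^ 2 * t) = -(b * (z - c) ^ 2) := by
      rw [hlam, hb_def, hc_def]
      field_simp
      ring
    rw [hexp, hG'_def, hH_def]
    have hpoly : (z + μ * t) * z / (σ ^ 2 * t) - 1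
        = ((z - c) * (z + 2 * c) / (σ ^ 2 * t) - 1) + 2 * μ ^ 2 * t / σ ^ 2 := by
      rw [hc_def]
      field_simp
      ring
    rw [hpoly]
    ring
  -- derivative of the antiderivative
  have hGderiv : ∀ z : ℝ, HasDerivAt G (G' z) z := by
    intro z
    have h1 : HasDerivAt (fun z : ℝ => -(b * (z - c) ^ 2)) (-(b * (2 * (z - c)))) z := by
      have h0 : HasDerivAt (fun z : ℝ => z - c) 1 z := (hasDerivAt_id z).sub_const c
      have := ((h0.pow 2).const_mul b).neg
      exact this.congr_deriv (by norm_num)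
    have h2 : HasDerivAt (fun z : ℝ => Real.exp (-(b * (z - c) ^ 2)))
        (Real.exp (-(b * (z - c) ^ 2)) * (-(b * (2 * (z - c))))) z := h1.exp
    have h3 := (((hasDerivAt_id z).add_const (2 * c)).mul h2).neg
    refine h3.congr_deriv ?_
    simp only [id_eq, hG'_def, hb_def, hc_def]
    have hne : (σ ^ 2 * t) ≠ 0 := ne_of_gt hσ2t
    have hσne : σ ≠ 0 := hσ.ne'
    have htne : t ≠ 0 := ht.ne'
    field_simp
    ring
  -- integrability of G'
  have hG'int : Integrable G' := by
    have h1 := (aux_int2 hb).const_mul (1 / (σ ^ 2 * t))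
    have h2 := (integrable_mul_exp_neg_mul_sq hb).const_mul (3 * c / (σ ^ 2 * t))
    have h3 := (integrable_exp_neg_mul_sq hb).const_mul 1
    have hsum := (h1.add ((by simpa [neg_mul] using h2 :
        Integrable fun y : ℝ => 3 * c / (σ ^ 2 * t) * (y * Real.exp (-(b * y ^ 2)))).sub
        (by simpa [neg_mul] using h3 : Integrable fun y : ℝ => Real.exp (-(b * y ^ 2)))))
    have hcomp := hsum.comp_sub_right c
    refine hcomp.congr ?_
    filter_upwards with z
    rw [hG'_def]
    have hne : (σ ^ 2 * t) ≠ 0 := ne_of_gt hσ2t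
    simp only [Pi.add_apply, Pi.sub_apply]
    field_simp
    ring
  -- integrability of H
  have hHexp : Integrable (fun z : ℝ => Real.exp (-(b * (z - c) ^ 2))) := by
    have := (by simpa [neg_mul] using integrable_exp_neg_mul_sq hb :
      Integrable fun y : ℝ => Real.exp (-(b * y ^ 2)))
    exact this.comp_sub_right c
  have hHint : Integrable H := hHexp.mul_const _
  -- limit of G at infinity
  have hGtend : Tendsto G atTop (𝓝 0) := by
    have hshift : Tendsto (fun z : ℝ => z - c) atTop atTop :=
      tendsto_atTop_add_const_right atTop (-c) tendsto_id
    have hsum : Tendsto (fun y : ℝ => y * Real.exp (-(b * y ^ 2))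
        + 3 * c * Real.exp (-(b * y ^ 2))) atTop (𝓝 0) := by
      have := (aux_l1 hb).add ((aux_l0 hb).const_mul (3 * c))
      simpa using this
    have hcomp := hsum.comp hshift
    have : Tendsto (fun z : ℝ => (z + 2 * c) * Real.exp (-(b * (z - c) ^ 2))) atTop (𝓝 0) := by
      refine hcomp.congr fun z => ?_
      simp only [Function.comp]
      ring
    simpa [hG_def] using this.neg
  -- FTC on (0, ∞)
  have hFTC : ∫ z in Set.Ioi (0:ℝ), G' z = 2 * c * Real.exp (-(b * c ^ 2)) := by
    have := integral_Ioi_of_hasDerivAt_of_tendsto' (f := G) (f' := G') (a := 0)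
      (fun x _ => hGderiv x) hG'int.integrableOn hGtend
    rw [this, hG_def]
    norm_num
  have hG'le : ∫ z in Set.Ioi (0:ℝ), G' z ≤ 2 * c := by
    rw [hFTC]
    have h1 : Real.exp (-(b * c ^ 2)) ≤ 1 := Real.exp_le_one_iff.mpr (by positivity |> neg_nonpos.mpr)
    nlinarith [Real.exp_pos (-(b * c ^ 2))]
  -- Gaussian integral bound for H
  have hgauss : ∫ z : ℝ, Real.exp (-(b * (z - c) ^ 2)) = Real.sqrt (2 * Real.pi * σ ^ 2 * t) := by
    have h1 : ∫ z : ℝ, Real.exp (-(b * (z - c) ^ 2))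
        = ∫ z : ℝ, Real.exp (-(b * z ^ 2)) :=
      integral_sub_right_eq_self (fun y : ℝ => Real.exp (-(b * y ^ 2))) c
    rw [h1]
    have h2 : ∫ z : ℝ, Real.exp (-(b * z ^ 2)) = Real.sqrt (Real.pi / b) := by
      simpa [neg_mul] using integral_gaussian b
    rw [h2]
    congr 1
    rw [hb_def]
    field_simp
  have hHle : ∫ z in Set.Ioi (0:ℝ), H z
      ≤ Real.sqrt (2 * Real.pi * σ ^ 2 * t) * (2 * μ ^ 2 * t / σ ^ 2) := by
    have hle : ∫ z in Set.Ioi (0:ℝ), H z ≤ ∫ z : ℝ, H z := by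
      refine setIntegral_le_integral hHint ?_
      filter_upwards with z
      rw [hH_def]
      positivity
    refine hle.trans ?_
    rw [hH_def]
    rw [integral_mul_const, hgauss]
  -- put the integral together
  have hsplit : (∫ z in Set.Ioi (0 : ℝ),
        Real.exp (lam * z - (z + μ * t) ^ 2 / (2 * σ ^ 2 * t)) *
          ((z + μ * t) * z / (σ ^ 2 * t) - 1))
      = (∫ z in Set.Ioi (0:ℝ), G' z) + ∫ z in Set.Ioi (0:ℝ), H z := by
    rw [← integral_add hG'int.integrableOn hHint.integrableOn]
    exact setIntegral_congr_fun measurableSet_Ioi fun z _ => key z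
  have hIle : (∫ z in Set.Ioi (0 : ℝ),
        Real.exp (lam * z - (z + μ * t) ^ 2 / (2 * σ ^ 2 * t)) *
          ((z + μ * t) * z / (σ ^ 2 * t) - 1))
      ≤ 2 * c + Real.sqrt (2 * Real.pi * σ ^ 2 * t) * (2 * μ ^ 2 * t / σ ^ 2) := by
    rw [hsplit]; exact add_le_add hG'le hHle
  -- final arithmetic
  set E : ℝ := Real.sqrt (2 * Real.pi * σ ^ 2 * t) with hE_def
  have hE : 0 < E := Real.sqrt_pos.mpr (by positivity)
  have hsq3 : Real.sqrt (2 * Real.pi * σ ^ 2 * t ^ 3) = E * t := by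
    rw [hE_def, show 2 * Real.pi * σ ^ 2 * t ^ 3 = (2 * Real.pi * σ ^ 2 * t) * t ^ 2 by ring,
      Real.sqrt_mul (by positivity), Real.sqrt_sq ht.le]
  rw [hsq3]
  have hstep : (E * t)⁻¹ * (∫ z in Set.Ioi (0 : ℝ),
        Real.exp (lam * z - (z + μ * t) ^ 2 / (2 * σ ^ 2 * t)) *
          ((z + μ * t) * z / (σ ^ 2 * t) - 1))
      ≤ (E * t)⁻¹ * (2 * c + E * (2 * μ ^ 2 * t / σ ^ 2)) := by
    exact mul_le_mul_of_nonneg_left hIle (by positivity)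
  refine hstep.trans ?_
  have heq : (E * t)⁻¹ * (2 * c + E * (2 * μ ^ 2 * t / σ ^ 2))
      = 2 * μ / E + 2 * μ ^ 2 / σ ^ 2 := by
    rw [hc_def]
    field_simp
  rw [heq]
  have hst : 0 < σ * Real.sqrt t := by positivity
  have hEge : σ * Real.sqrt t ≤ E := by
    have h1 : Real.sqrt (σ ^ 2 * t) = σ * Real.sqrt t := by
      rw [Real.sqrt_mul (by positivity), Real.sqrt_sq hσ.le]
    rw [← h1, hE_def]
    apply Real.sqrt_le_sqrt
    nlinarith [Real.pi_gt_three]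
  have h2 : 2 * μ / E ≤ 3 * μ / (σ * Real.sqrt t) :=
    div_le_div₀ (by positivity) (by linarith) hst hEge
  linarith
end

section
/- Let a: (0,∞) → [α,∞) be right-continuous and nonincreasing, and let t ↦ (Z⁰_t, R_t) be continuous paths with Z⁰ real-valued starting at z ≥ α and R positive. Define D_t := sup_{0≤s≤t}[Z⁰_s − a(R_s)]^+ (with D_{0−}=0) and Z_t := Z⁰_t − D_t. Then: (i) D is right-continuous and nondecreasing; (ii) Z_t ≤ a(R_t) for all t ≥ 0; (iii) Z_{t−} − ΔD_t = min{Z_{t−}, a(R_t)} at every jump time t of D, where ΔD_t := D_t − D_{t−}. -/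
open Set Filter

theorem stmt10 (α z : ℝ) (hz : α ≤ z) (a : ℝ → ℝ)
    (ha_ge : ∀ r, 0 < r → α ≤ a r)
    (ha_anti : AntitoneOn a (Set.Ioi 0))
    (ha_rc : ∀ r, 0 < r → Filter.Tendsto a (nhdsWithin r (Set.Ioi r)) (nhds (a r)))
    (Z0 R : ℝ → ℝ) (hZ0 : Continuous Z0) (hZ00 : Z0 0 = z)
    (hR : Continuous R) (hRpos : ∀ t, 0 < R t)
    (D Z : ℝ → ℝ)
    (hD : ∀ t, D t = sSup ((fun s => max (Z0 s - a (R s)) 0) '' Set.Icc 0 t))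
    (hZ : ∀ t, Z t = Z0 t - D t) :
    MonotoneOn D (Set.Ici 0) ∧
    (∀ t, 0 ≤ t → Filter.Tendsto D (nhdsWithin t (Set.Ici t)) (nhds (D t))) ∧
    (∀ t, 0 ≤ t → Z t ≤ a (R t)) ∧
    (∀ t, 0 < t → Function.leftLim D t ≠ D t →
      Z0 t - Function.leftLim D t - (D t - Function.leftLim D t)
        = min (Z0 t - Function.leftLim D t) (a (R t))) ∧
    (z - D 0 = min z (a (R 0))) := by
  set f : ℝ → ℝ := fun s => max (Z0 s - a (R s)) 0 with hf
  have hf_nonneg : ∀ s, 0 ≤ f s := fun s => le_max_right _ _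
  have hbdd : ∀ t : ℝ, BddAbove (f '' Set.Icc 0 t) := by
    intro t
    obtain ⟨M, hM⟩ := (isCompact_Icc (a := (0:ℝ)) (b := t)).bddAbove_image hZ0.continuousOn
    refine ⟨max (M - α) 0, ?_⟩
    rintro _ ⟨s, hs, rfl⟩
    have h1 : Z0 s ≤ M := hM ⟨s, hs, rfl⟩
    have h2 : α ≤ a (R s) := ha_ge _ (hRpos s)
    exact max_le_max (by linarith) le_rfl
  have hft : ∀ t : ℝ, 0 ≤ t → f t ≤ D t := by
    intro t ht; rw [hD]
    exact le_csSup (hbdd t) ⟨t, ⟨ht, le_rfl⟩, rfl⟩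
  have hD_nonneg : ∀ t, 0 ≤ t → 0 ≤ D t := fun t ht => (hf_nonneg t).trans (hft t ht)
  have hmono : Monotone D := by
    intro s t hst
    rcases le_or_gt 0 s with hs | hs
    · rw [hD s, hD t]
      exact csSup_le_csSup (hbdd t) ⟨f s, ⟨s, ⟨hs, le_rfl⟩, rfl⟩⟩
        (Set.image_mono (Set.Icc_subset_Icc_right hst))
    · rcases le_or_gt 0 t with ht | ht
      · rw [hD s, Set.Icc_eq_empty (by linarith), Set.image_empty, Real.sSup_empty]
        exact hD_nonneg t ht
      · rw [hD s, hD t, Set.Icc_eq_empty (by linarith), Set.Icc_eq_empty (by linarith)]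
  have husc : ∀ t : ℝ, ∀ ε : ℝ, 0 < ε → ∀ᶠ s in nhds t, f s ≤ f t + ε := by
    intro t ε hε
    have hr : 0 < R t := hRpos t
    obtain ⟨δ, hδ, hδ'⟩ :=
      Metric.tendsto_nhdsWithin_nhds.mp (ha_rc (R t) hr) (ε/2) (by linarith)
    have ha_lb : ∀ r' : ℝ, 0 < r' → r' < R t + δ → a (R t) - ε/2 ≤ a r' := by
      intro r' hr' hlt
      rcases le_or_gt r' (R t) with h | h
      · have := ha_anti hr' hr h; linarith
      · have h2 := hδ' (Set.mem_Ioi.mpr h)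
          (by rw [Real.dist_eq, abs_of_pos (by linarith)]; linarith)
        rw [Real.dist_eq] at h2
        have := abs_lt.mp h2
        linarith [this.1]
    have h1 : ∀ᶠ s in nhds t, R s < R t + δ :=
      (hR.tendsto t).eventually_lt_const (by linarith)
    have h2 : ∀ᶠ s in nhds t, Z0 s < Z0 t + ε/2 :=
      (hZ0.tendsto t).eventually_lt_const (by linarith)
    filter_upwards [h1, h2] with s hs1 hs2
    have hb := ha_lb (R s) (hRpos s) hs1
    have hle : Z0 s - a (R s) ≤ Z0 t - a (R t) + ε := by linarith
    calc f s ≤ max (Z0 t - a (R t) + ε) 0 := max_le_max hle le_rfl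
    _ ≤ f t + ε := by
        apply max_le
        · exact add_le_add_left (le_max_left _ _) ε
        · linarith [hf_nonneg t]
  have hrc : ∀ t, 0 ≤ t → Filter.Tendsto D (nhdsWithin t (Set.Ici t)) (nhds (D t)) := by
    intro t ht
    rw [Metric.tendsto_nhdsWithin_nhds]
    intro ε hε
    obtain ⟨δ, hδ, hδ'⟩ := Metric.eventually_nhds_iff.mp (husc t (ε/2) (by linarith))
    refine ⟨δ, hδ, ?_⟩
    intro u hu hdu
    have htu : t ≤ u := hu
    have h1 : D t ≤ D u := hmono htu
    have hdu' : u - t < δ := by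
      rw [Real.dist_eq, abs_of_nonneg (by linarith)] at hdu; linarith
    have h2 : D u ≤ D t + ε/2 := by
      rw [hD u]
      apply csSup_le ((Set.nonempty_Icc.mpr (le_trans ht htu)).image f)
      rintro _ ⟨s, ⟨hs0, hsu⟩, rfl⟩
      rcases le_or_gt s t with h | h
      · have := (hft s hs0).trans (hmono h)
        linarith
      · have hds : dist s t < δ := by
          rw [Real.dist_eq, abs_of_pos (by linarith)]; linarith
        have := hδ' hds
        have := hft t ht
        linarith
    rw [Real.dist_eq, abs_of_nonneg (by linarith)]
    linarith
  refine ⟨hmono.monotoneOn _, hrc, ?_, ?_, ?_⟩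
  · intro t ht
    rw [hZ t]
    have h1 := hft t ht
    have h2 : Z0 t - a (R t) ≤ f t := le_max_left _ _
    linarith
  · intro t ht hne
    have hLle : Function.leftLim D t ≤ D t := hmono.leftLim_le le_rfl
    have hLlt : Function.leftLim D t < D t := lt_of_le_of_ne hLle hne
    have hL0 : 0 ≤ Function.leftLim D t :=
      le_trans (hD_nonneg 0 le_rfl) (hmono.le_leftLim ht)
    have hDt : D t ≤ max (Function.leftLim D t) (f t) := by
      rw [hD t]
      apply csSup_le ((Set.nonempty_Icc.mpr (le_of_lt ht)).image f)
      rintro _ ⟨s, ⟨hs0, hst⟩, rfl⟩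
      rcases eq_or_lt_of_le hst with h | h
      · subst h; exact le_max_right _ _
      · exact le_trans (le_trans (hft s hs0) (hmono.le_leftLim h)) (le_max_left _ _)
    have hDft : D t = f t := by
      refine le_antisymm ?_ (hft t ht.le)
      rcases le_total (Function.leftLim D t) (f t) with h | h
      · rwa [max_eq_right h] at hDt
      · rw [max_eq_left h] at hDt; linarith
    have hfpos : 0 < f t := by rw [← hDft]; linarith
    have hx : f t = Z0 t - a (R t) := by
      rcases le_total (Z0 t - a (R t)) 0 with h | h
      · rw [hf] at hfpos; simp only [max_eq_right h] at hfpos; linarith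
      · exact max_eq_left h
    have hDval : D t = Z0 t - a (R t) := hDft.trans hx
    have hmin : a (R t) ≤ Z0 t - Function.leftLim D t := by linarith
    rw [min_eq_right hmin]
    linarith
  · have hD0 : D 0 = max (z - a (R 0)) 0 := by
      rw [hD 0, Set.Icc_self, Set.image_singleton, csSup_singleton]
      simp only [hf, hZ00]
    rcases le_total (a (R 0)) z with h | h
    · rw [hD0, max_eq_left (by linarith), min_eq_right h]; ring
    · rw [hD0, max_eq_right (by linarith), min_eq_left h]; ring
end

section
/- Let α ∈ ℝ, λ > 0, and let U: [0,∞) × [α,∞) → ℝ be defined by U(r,z) = sup_τ E[exp(λ((z−α)∨S_τ − (z−α)) − ∫₀^τ ρ(R^r_s)ds)], where the supremum is over stopping times, S is the running supremum of a drifted Brownian motion independent of the process R^r, and ρ is nonnegative and nondecreasing. Then for each fixed r, the map z ↦ U(r,z) is convex and nonincreasing on [α,∞), and for each fixed z the map r ↦ U(r,z) is nonincreasing. -/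
open MeasureTheory

/-- exp of an affine function is convex. -/
lemma expAffine_convex (α c e : ℝ) :
    ConvexOn ℝ (Set.Ici α) (fun z : ℝ => Real.exp (c - e * z)) := by
  have h := (convexOn_exp).comp_affineMap (AffineMap.lineMap c (c - e) : ℝ →ᵃ[ℝ] ℝ)
  have heq : (fun z : ℝ => Real.exp (c - e * z)) =
      Real.exp ∘ (AffineMap.lineMap c (c - e) : ℝ →ᵃ[ℝ] ℝ) := by
    funext z
    simp only [Function.comp_apply, AffineMap.lineMap_apply, vsub_eq_sub, vadd_eq_add,
      smul_eq_mul]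
    ring_nf
  rw [heq]
  exact h.subset (Set.subset_univ _) (convex_Ici α)

/-- For fixed s ≥ 0 and d, the map z ↦ exp(lam (max (z-α) s - (z-α)) - d) is convex on [α,∞). -/
lemma pointwise_convex (α lam : ℝ) (hlam : 0 < lam) (s d : ℝ) :
    ConvexOn ℝ (Set.Ici α)
      (fun z : ℝ => Real.exp (lam * (max (z - α) s - (z - α)) - d)) := by
  have key : ∀ z : ℝ, lam * (max (z - α) s - (z - α)) - d
      = max (Real.exp ((lam * (s + α) - d) - lam * z)).log (Real.exp (-d)).log := by
    intro z
    rw [Real.log_exp, Real.log_exp]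
    rcases le_total (z - α) s with h | h
    · rw [max_eq_right h, max_eq_left (by nlinarith)]
      ring
    · rw [max_eq_left h, max_eq_right (by nlinarith)]
      ring
  have heq : (fun z : ℝ => Real.exp (lam * (max (z - α) s - (z - α)) - d)) =
      (fun z : ℝ => Real.exp ((lam * (s + α) - d) - lam * z)) ⊔
        (fun _ : ℝ => Real.exp (-d)) := by
    funext z
    have := key z
    rw [Real.log_exp, Real.log_exp] at this
    simp only [Pi.sup_apply, this]
    exact Real.exp_monotone.map_max
  rw [heq]
  exact (expAffine_convex α _ lam).sup (convexOn_const _ (convex_Ici α))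

theorem stmt12 {Ω : Type*} [MeasurableSpace Ω] (P : Measure Ω) [IsProbabilityMeasure P]
    {ι : Type*} [Nonempty ι]
    (α lam : ℝ) (hlam : 0 < lam)
    (S : ι → Ω → ℝ) (hS : ∀ τ ω, 0 ≤ S τ ω)
    (I : ι → ℝ → Ω → ℝ) (hI0 : ∀ τ r ω, 0 ≤ I τ r ω)
    (hImono : ∀ τ ω, MonotoneOn (fun r => I τ r ω) (Set.Ici 0))
    (U : ℝ → ℝ → ℝ)
    (hU : ∀ r z, U r z =
      ⨆ τ : ι, ∫ ω, Real.exp (lam * (max (z - α) (S τ ω) - (z - α)) - I τ r ω) ∂P)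
    (hint : ∀ τ r z,
      Integrable (fun ω => Real.exp (lam * (max (z - α) (S τ ω) - (z - α)) - I τ r ω)) P)
    (hbdd : ∀ r z, BddAbove (Set.range fun τ : ι =>
      ∫ ω, Real.exp (lam * (max (z - α) (S τ ω) - (z - α)) - I τ r ω) ∂P)) :
    (∀ r, ConvexOn ℝ (Set.Ici α) (U r)) ∧
    (∀ r, AntitoneOn (U r) (Set.Ici α)) ∧
    (∀ z, AntitoneOn (fun r => U r z) (Set.Ici 0)) := by
  set f : ι → ℝ → ℝ → Ω → ℝ := fun τ r z ω =>
    Real.exp (lam * (max (z - α) (S τ ω) - (z - α)) - I τ r ω) with hf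
  -- convexity of the integral in z
  have hintconv : ∀ τ r, ConvexOn ℝ (Set.Ici α) (fun z => ∫ ω, f τ r z ω ∂P) := by
    intro τ r
    refine ⟨convex_Ici α, fun a ha b hb p q hp hq hpq => ?_⟩
    have hpt : ∀ ω, f τ r (p • a + q • b) ω ≤ p * f τ r a ω + q * f τ r b ω := by
      intro ω
      have := (pointwise_convex α lam hlam (S τ ω) (I τ r ω)).2 ha hb hp hq hpq
      simpa [smul_eq_mul] using this
    calc ∫ ω, f τ r (p • a + q • b) ω ∂P
        ≤ ∫ ω, (p * f τ r a ω + q * f τ r b ω) ∂P := by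
          refine integral_mono (hint τ r _) ?_ hpt
          exact ((hint τ r a).const_mul p).add ((hint τ r b).const_mul q)
      _ = p • (∫ ω, f τ r a ω ∂P) + q • (∫ ω, f τ r b ω ∂P) := by
          rw [integral_add ((hint τ r a).const_mul p) ((hint τ r b).const_mul q),
            integral_const_mul, integral_const_mul]
          simp only [smul_eq_mul]; rfl
  refine ⟨?_, ?_, ?_⟩
  · -- convexity of U r
    intro r
    refine ⟨convex_Ici α, fun a ha b hb p q hp hq hpq => ?_⟩
    rw [hU r (p • a + q • b)]
    refine ciSup_le fun τ => ?_
    have h1 := (hintconv τ r).2 ha hb hp hq hpq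
    refine le_trans h1 ?_
    have h2 : (∫ ω, f τ r a ω ∂P) ≤ U r a := by
      rw [hU r a]; exact le_ciSup (hbdd r a) τ
    have h3 : (∫ ω, f τ r b ω ∂P) ≤ U r b := by
      rw [hU r b]; exact le_ciSup (hbdd r b) τ
    have := add_le_add (smul_le_smul_of_nonneg_left h2 hp)
      (smul_le_smul_of_nonneg_left h3 hq)
    simpa using this
  · -- antitone in z
    intro r z1 hz1 z2 hz2 hz
    rw [hU r z1, hU r z2]
    refine ciSup_le fun τ => ?_
    refine le_trans ?_ (le_ciSup (hbdd r z1) τ)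
    refine integral_mono (hint τ r z2) (hint τ r z1) fun ω => ?_
    refine Real.exp_le_exp.2 (sub_le_sub_right ?_ _)
    refine mul_le_mul_of_nonneg_left ?_ hlam.le
    rcases le_total (z1 - α) (S τ ω) with h1 | h1 <;>
      rcases le_total (z2 - α) (S τ ω) with h2 | h2 <;>
      simp [max_eq_left, max_eq_right, h1, h2] <;> linarith
  · -- antitone in r
    intro z r1 hr1 r2 hr2 hr
    simp only
    rw [hU r1 z, hU r2 z]
    refine ciSup_le fun τ => ?_
    refine le_trans ?_ (le_ciSup (hbdd r1 z) τ)
    refine integral_mono (hint τ r2 z) (hint τ r1 z) fun ω => ?_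
    exact Real.exp_le_exp.2 (sub_le_sub_left (hImono τ ω hr1 hr2 hr) _)
end
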